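/- Let d ≥ 5. The set X consisting of the zero vector together with all coordinate permutations of (1,1,1,−1,0,...,0) in R^{d+1} has cardinality 1 + (d−2)·binomial(d+1,3), and the set of pairwise Euclidean distances between distinct elements of X has cardinality 6. -/

import Mathlib

open Finset

lemma exists_perm_comp {α β : Type*} [Fintype α] (f g : α → β)
    (h : ∀ b, Nat.card {a // f a = b} = Nat.card {a // g a = b}) :
    ∃ e : Equiv.Perm α, ∀ i, f (e i) = g i := by
  classical
  have e2 : ∀ b, {a // g a = b} ≃ {a // f a = b} := fun b =>
    Fintype.equivOfCardEq (by
      rw [← Nat.card_eq_fintype_card, ← Nat.card_eq_fintype_card, h b])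
  refine ⟨(Equiv.sigmaFiberEquiv g).symm.trans
    ((Equiv.sigmaCongrRight e2).trans (Equiv.sigmaFiberEquiv f)), fun i => ?_⟩
  exact ((e2 (g i)) ⟨i, rfl⟩).2

lemma nat_card_subtype {n : ℕ} (P : Fin n → Prop) [DecidablePred P] :
    Nat.card {i // P i} = (univ.filter P).card := by
  simp [Nat.card_eq_fintype_card, Fintype.card_subtype]

lemma card_filter_val {n : ℕ} (A : Finset ℕ) (hA : ∀ k ∈ A, k < n) :
    (univ.filter (fun i : Fin n => i.val ∈ A)).card = A.card := by
  rw [show univ.filter (fun i : Fin n => i.val ∈ A) = A.attachFin hA by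
    ext i; simp [Finset.mem_attachFin]]
  exact Finset.card_attachFin A hA

lemma sum_small {n : ℕ} (hd : 6 ≤ n) (h : ℕ → ℝ) (hh : ∀ k, 6 ≤ k → h k = 0) :
    ∑ i : Fin n, h i.val = h 0 + h 1 + h 2 + h 3 + h 4 + h 5 := by
  rw [Fin.sum_univ_eq_sum_range]
  rw [← Finset.sum_range_add_sum_Ico h hd]
  rw [Finset.sum_Ico_eq_sum_range]
  have : ∀ k ∈ Finset.range (n-6), h (6 + k) = 0 := fun k _ => hh _ (by omega)
  rw [Finset.sum_congr rfl this, Finset.sum_const, smul_zero, add_zero]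
  simp [Finset.sum_range_succ]

def nvec (n : ℕ) (B : Finset ℕ) (b : ℕ) : EuclideanSpace ℝ (Fin n) :=
  WithLp.toLp 2 (fun i => if i.val ∈ B then 1 else if i.val = b then -1 else 0)

lemma nvec_fiber_card {n : ℕ} {B : Finset ℕ} {b : ℕ} (hB : ∀ k ∈ B, k < n)
    (hb : b < n) (hbB : b ∉ B) (r : ℝ) :
    Nat.card {i : Fin n // nvec n B b i = r} =
      if r = 1 then B.card else if r = -1 then 1 else if r = 0 then n - (B.card + 1) else 0 := by
  classical
  rw [nat_card_subtype]
  by_cases h1 : r = 1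
  · subst h1
    rw [if_pos rfl, ← card_filter_val B hB]
    congr 1; ext i
    simp only [mem_filter, mem_univ, true_and, nvec]
    split_ifs with h h' <;> simp_all <;> norm_num
  by_cases h2 : r = -1
  · subst h2
    rw [if_neg h1, if_pos rfl, Finset.card_eq_one]
    refine ⟨⟨b, hb⟩, ?_⟩
    ext i
    simp only [mem_filter, mem_univ, true_and, nvec, Finset.mem_singleton, Fin.ext_iff]
    split_ifs with h h'
    · constructor
      · intro hc; norm_num at hc
      · intro hc; exact absurd (hc ▸ h) hbB
    · constructor
      · intro _; exact h'
      · intro _; rfl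
    · constructor
      · intro hc; norm_num at hc
      · intro hc; exact absurd hc h'
  by_cases h3 : r = 0
  · subst h3
    rw [if_neg h1, if_neg h2, if_pos rfl]
    have : univ.filter (fun i : Fin n => nvec n B b i = 0) =
        (univ.filter (fun i : Fin n => i.val ∈ insert b B))ᶜ := by
      ext i
      simp only [mem_compl, mem_filter, mem_univ, true_and, nvec, Finset.mem_insert]
      split_ifs with h h' <;> simp_all
    rw [this, Finset.card_compl, card_filter_val (insert b B)
      (fun k hk => by rcases Finset.mem_insert.1 hk with h | h; exacts [by omega, hB k h]),
      Finset.card_insert_of_notMem hbB, Fintype.card_fin, add_comm]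
  · rw [if_neg h1, if_neg h2, if_neg h3]
    rw [Finset.card_eq_zero]
    ext i
    simp only [mem_filter, mem_univ, true_and, nvec, Finset.notMem_empty, iff_false]
    split_ifs <;> intro hc
    exacts [h1 hc.symm, h2 hc.symm, h3 hc.symm]

lemma exists_perm_nvec {n : ℕ} {B : Finset ℕ} {b : ℕ} {B' : Finset ℕ} {b' : ℕ}
    (hB : ∀ k ∈ B, k < n) (hBc : B.card = 3) (hb : b < n) (hbB : b ∉ B)
    (hB' : ∀ k ∈ B', k < n) (hBc' : B'.card = 3) (hb' : b' < n) (hbB' : b' ∉ B') :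
    ∃ σ : Equiv.Perm (Fin n), ∀ i, nvec n B b (σ i) = nvec n B' b' i :=
  exists_perm_comp _ _ (fun r => by
    rw [nvec_fiber_card hB hb hbB, nvec_fiber_card hB' hb' hbB', hBc, hBc'])

lemma card_filter_perm {n : ℕ} (σ : Equiv.Perm (Fin n)) (p : Fin n → Prop) [DecidablePred p] :
    (univ.filter (fun i => p (σ i))).card = (univ.filter p).card := by
  rw [← Finset.card_image_of_injective (univ.filter fun i => p (σ i)) σ.injective]
  congr 1
  ext j
  simp only [Finset.mem_image, mem_filter, mem_univ, true_and]
  constructor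
  · rintro ⟨i, hi, rfl⟩; exact hi
  · intro h; exact ⟨σ⁻¹ j, by simpa using h, by simp⟩

lemma orbit_repr {n : ℕ} (hn : 6 ≤ n) (σ : Equiv.Perm (Fin n)) :
    ∃ B : Finset ℕ, ∃ b : ℕ, (∀ k ∈ B, k < n) ∧ B.card = 3 ∧ b < n ∧ b ∉ B ∧
      ∀ i, nvec n {0,1,2} 3 (σ i) = nvec n B b i := by
  classical
  refine ⟨Finset.image Fin.val (univ.filter fun i => ((σ i : Fin n) : ℕ) ∈ ({0,1,2} : Finset ℕ)),
    ((σ⁻¹ ⟨3, by omega⟩ : Fin n) : ℕ), ?_, ?_, ?_, ?_, ?_⟩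
  · intro k hk
    obtain ⟨i, -, rfl⟩ := Finset.mem_image.1 hk
    exact i.isLt
  · rw [Finset.card_image_of_injective _ Fin.val_injective, card_filter_perm σ (fun j => (j : ℕ) ∈ ({0,1,2} : Finset ℕ)),
      card_filter_val ({0,1,2} : Finset ℕ) (by intro k hk; fin_cases hk <;> omega)]
    rfl
  · exact (σ⁻¹ ⟨3, by omega⟩).isLt
  · intro hmem
    obtain ⟨i, hi, hvi⟩ := Finset.mem_image.1 hmem
    rw [mem_filter] at hi
    have : i = σ⁻¹ ⟨3, by omega⟩ := Fin.val_injective hvi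
    rw [this] at hi
    simp at hi
  · intro i
    have h1 : (((σ i : Fin n) : ℕ) ∈ ({0,1,2} : Finset ℕ)) ↔
        ((i : ℕ) ∈ Finset.image Fin.val (univ.filter fun j => ((σ j : Fin n) : ℕ) ∈ ({0,1,2} : Finset ℕ))) := by
      simp only [Finset.mem_image, mem_filter, mem_univ, true_and]
      constructor
      · intro h; exact ⟨i, h, rfl⟩
      · rintro ⟨j, hj, hji⟩
        rwa [Fin.val_injective hji] at hj
    have h2 : (((σ i : Fin n) : ℕ) = 3) ↔ ((i : ℕ) = ((σ⁻¹ ⟨3, by omega⟩ : Fin n) : ℕ)) := by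
      constructor
      · intro h
        have : σ i = ⟨3, by omega⟩ := Fin.ext h
        rw [← this]; simp
      · intro h
        have : i = σ⁻¹ ⟨3, by omega⟩ := Fin.val_injective h
        rw [this]; simp
    simp only [nvec]
    rw [if_congr h1 rfl rfl, if_congr h2 rfl rfl]

lemma nvec_sq_sum {n : ℕ} (hn : 6 ≤ n) (σ : Equiv.Perm (Fin n)) :
    ∑ i, (nvec n {0,1,2} 3 (σ i))^2 = 4 := by
  rw [Equiv.sum_comp σ (fun j => (nvec n {0,1,2} 3 j)^2)]
  have : ∑ j : Fin n, (nvec n {0,1,2} 3 j)^2 =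
      ∑ j : Fin n, (fun k : ℕ =>
        (if k ∈ ({0,1,2} : Finset ℕ) then (1:ℝ) else if k = 3 then -1 else 0)^2) j.val :=
    Finset.sum_congr rfl (fun j _ => rfl)
  have h2 := sum_small hn (fun k : ℕ =>
      (if k ∈ ({0,1,2} : Finset ℕ) then (1:ℝ) else if k = 3 then -1 else 0)^2)
    (by
      intro k hk
      have ha : k ∉ ({0,1,2} : Finset ℕ) := by simp; omega
      have hb : k ≠ 3 := by omega
      simp [ha, hb])
  rw [this, h2]
  norm_num

lemma orbit_eq {n : ℕ} [DecidableEq (EuclideanSpace ℝ (Fin n))] (hn : 6 ≤ n) :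
    {x : EuclideanSpace ℝ (Fin n) | ∃ σ : Equiv.Perm (Fin n), ∀ i, x i = nvec n {0,1,2} 3 (σ i)} =
      ↑((((Finset.range n).powersetCard 3).sigma (fun B => Finset.range n \ B)).image
        (fun p => nvec n p.1 p.2)) := by
  ext x
  simp only [Set.mem_setOf_eq, Finset.coe_image, Set.mem_image, Finset.mem_coe,
    Finset.mem_sigma, Finset.mem_powersetCard, Finset.mem_sdiff, Finset.mem_range]
  constructor
  · rintro ⟨σ, hσ⟩
    obtain ⟨B, b, hBlt, hBc, hb, hbB, hrep⟩ := orbit_repr hn σ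
    refine ⟨⟨B, b⟩, ⟨⟨fun k hk => Finset.mem_range.2 (hBlt k hk), hBc⟩, hb, hbB⟩, ?_⟩
    ext i
    exact ((hσ i).trans (hrep i)).symm
  · rintro ⟨⟨B, b⟩, ⟨⟨hBsub, hBc⟩, hb, hbB⟩, rfl⟩
    obtain ⟨σ, hσ⟩ := exists_perm_nvec (B := {0,1,2}) (b := 3) (B' := B) (b' := b)
      (by intro k hk; fin_cases hk <;> omega) (by rfl) (by omega) (by decide)
      (fun k hk => Finset.mem_range.1 (hBsub hk)) hBc hb hbB
    exact ⟨σ, fun i => (hσ i).symm⟩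

lemma orbit_card {n : ℕ} [DecidableEq (EuclideanSpace ℝ (Fin n))] (hn : 6 ≤ n) :
    ((((Finset.range n).powersetCard 3).sigma (fun B => Finset.range n \ B)).image
      (fun p => nvec n p.1 p.2)).card = n.choose 3 * (n - 3) := by
  rw [Finset.card_image_of_injOn]
  · rw [Finset.card_sigma]
    have : ∀ B ∈ (Finset.range n).powersetCard 3, (Finset.range n \ B).card = n - 3 := by
      intro B hB
      obtain ⟨hsub, hc⟩ := Finset.mem_powersetCard.1 hB
      rw [Finset.card_sdiff_of_subset hsub, Finset.card_range, hc]
    rw [Finset.sum_congr rfl this, Finset.sum_const, smul_eq_mul,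
      Finset.card_powersetCard, Finset.card_range]
  · rintro ⟨B, b⟩ hp ⟨B', b'⟩ hq h
    simp only [Finset.mem_coe, Finset.mem_sigma, Finset.mem_powersetCard, Finset.mem_sdiff,
      Finset.mem_range] at hp hq
    obtain ⟨⟨hBsub, hBc⟩, hb, hbB⟩ := hp
    obtain ⟨⟨hBsub', hBc'⟩, hb', hbB'⟩ := hq
    have key : ∀ k, k < n → ((if k ∈ B then (1:ℝ) else if k = b then -1 else 0) =
        (if k ∈ B' then (1:ℝ) else if k = b' then -1 else 0)) := by
      intro k hk
      exact congrArg (fun z : EuclideanSpace ℝ (Fin n) => z (⟨k, hk⟩ : Fin n)) h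
    have hBB : B = B' := by
      ext k
      constructor
      · intro hkB
        have hk : k < n := Finset.mem_range.1 (hBsub hkB)
        have := key k hk
        rw [if_pos hkB] at this
        by_contra hkB'
        rw [if_neg hkB'] at this
        split_ifs at this <;> norm_num at this
      · intro hkB'
        have hk : k < n := Finset.mem_range.1 (hBsub' hkB')
        have := key k hk
        rw [if_pos hkB'] at this
        by_contra hkB
        rw [if_neg hkB] at this
        split_ifs at this <;> norm_num at this
    subst hBB
    have := key b hb
    rw [if_neg hbB, if_pos rfl, if_neg hbB] at this
    split_ifs at this with hbb
    · exact Sigma.ext rfl (heq_of_eq hbb)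
    · norm_num at this

lemma dist_formula {n : ℕ} (x y : EuclideanSpace ℝ (Fin n)) :
    dist x y = Real.sqrt (∑ i, (x i - y i)^2) := by
  rw [EuclideanSpace.dist_eq]
  congr 1
  refine Finset.sum_congr rfl (fun i _ => ?_)
  rw [Real.dist_eq, sq_abs]

def wvec (n : ℕ) : Fin n → ℤ :=
  fun j => if (j : ℕ) ∈ ({0,1,2} : Finset ℕ) then 1 else if (j : ℕ) = 3 then -1 else 0

lemma nvec_cast {n : ℕ} (j : Fin n) : nvec n {0,1,2} 3 j = ((wvec n j : ℤ) : ℝ) := by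
  simp only [nvec, wvec]
  split_ifs <;> norm_num

lemma wvec_cases {n : ℕ} (j : Fin n) : wvec n j = -1 ∨ wvec n j = 0 ∨ wvec n j = 1 := by
  simp only [wvec]; split_ifs <;> simp

lemma wvec_neg_iff {n : ℕ} (hn : 6 ≤ n) (j : Fin n) : wvec n j = -1 ↔ j = ⟨3, by omega⟩ := by
  simp only [wvec]
  constructor
  · intro h
    by_cases hmem : (j : ℕ) ∈ ({0,1,2} : Finset ℕ)
    · rw [if_pos hmem] at h; norm_num at h
    · rw [if_neg hmem] at h
      by_cases h3 : (j : ℕ) = 3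
      · exact Fin.ext h3
      · rw [if_neg h3] at h; norm_num at h
  · intro h
    subst h
    norm_num

lemma orbit_pair_dist {n : ℕ} (hn : 6 ≤ n) (σ τ : Equiv.Perm (Fin n))
    (x y : EuclideanSpace ℝ (Fin n))
    (hx : ∀ i, x i = nvec n {0,1,2} 3 (σ i)) (hy : ∀ i, y i = nvec n {0,1,2} 3 (τ i))
    (hne : x ≠ y) :
    ∃ m : ℤ, -2 ≤ m ∧ m ≤ 3 ∧ dist x y = Real.sqrt (8 - 2 * (m : ℝ)) := by
  set m : ℤ := ∑ i, wvec n (σ i) * wvec n (τ i) with hm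
  have hprod : ∑ i, nvec n {0,1,2} 3 (σ i) * nvec n {0,1,2} 3 (τ i) = (m : ℝ) := by
    rw [hm, Int.cast_sum]
    exact Finset.sum_congr rfl (fun i _ => by rw [nvec_cast, nvec_cast]; push_cast; ring)
  have hsum : ∑ i, (x i - y i)^2 = 8 - 2 * (m : ℝ) := by
    have e1 : ∀ i ∈ Finset.univ, (x i - y i)^2 =
        (nvec n {0,1,2} 3 (σ i))^2 + (nvec n {0,1,2} 3 (τ i))^2 -
          2 * (nvec n {0,1,2} 3 (σ i) * nvec n {0,1,2} 3 (τ i)) := by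
      intro i _
      rw [hx i, hy i]; ring
    rw [Finset.sum_congr rfl e1, Finset.sum_sub_distrib, Finset.sum_add_distrib, ← Finset.mul_sum,
      nvec_sq_sum hn σ, nvec_sq_sum hn τ, hprod]
    ring
  have hdist : dist x y = Real.sqrt (8 - 2 * (m : ℝ)) := by
    rw [dist_formula, hsum]
  refine ⟨m, ?_, ?_, hdist⟩
  · -- lower bound
    have hpt : ∀ i ∈ Finset.univ,
        ((if i = σ⁻¹ ⟨3, by omega⟩ then (-1 : ℤ) else 0) +
          (if i = τ⁻¹ ⟨3, by omega⟩ then (-1 : ℤ) else 0)) ≤ wvec n (σ i) * wvec n (τ i) := by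
      intro i _
      by_cases hip : i = σ⁻¹ ⟨3, by omega⟩
      · have hwσ : wvec n (σ i) = -1 := by
          rw [wvec_neg_iff hn, hip]; simp
        by_cases hiq : i = τ⁻¹ ⟨3, by omega⟩
        · have hwτ : wvec n (τ i) = -1 := by
            rw [wvec_neg_iff hn, hiq]; simp
          rw [if_pos hip, if_pos hiq, hwσ, hwτ]; norm_num
        · rw [if_pos hip, if_neg hiq, hwσ]
          rcases wvec_cases (τ i) with h | h | h
          · exfalso
            rw [wvec_neg_iff hn] at h
            exact hiq (by rw [← h]; simp)
          · rw [h]; norm_num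
          · rw [h]; norm_num
      · have hwσ : wvec n (σ i) = 0 ∨ wvec n (σ i) = 1 := by
          rcases wvec_cases (σ i) with h | h | h
          · exfalso
            rw [wvec_neg_iff hn] at h
            exact hip (by rw [← h]; simp)
          · exact Or.inl h
          · exact Or.inr h
        by_cases hiq : i = τ⁻¹ ⟨3, by omega⟩
        · have hwτ : wvec n (τ i) = -1 := by
            rw [wvec_neg_iff hn, hiq]; simp
          rw [if_neg hip, if_pos hiq, hwτ]
          rcases hwσ with h | h <;> rw [h] <;> norm_num
        · rw [if_neg hip, if_neg hiq]
          rcases wvec_cases (τ i) with h' | h' | h'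
          · exfalso
            rw [wvec_neg_iff hn] at h'
            exact hiq (by rw [← h']; simp)
          · rcases hwσ with h | h <;> rw [h, h'] <;> norm_num
          · rcases hwσ with h | h <;> rw [h, h'] <;> norm_num
    have hge := Finset.sum_le_sum hpt
    rw [Finset.sum_add_distrib, Finset.sum_ite_eq' Finset.univ, Finset.sum_ite_eq' Finset.univ]
      at hge
    simp only [Finset.mem_univ, if_pos] at hge
    omega
  · -- upper bound
    by_contra hgt
    push_neg at hgt
    have h1 : (8 : ℝ) - 2 * (m : ℝ) ≤ 0 := by
      have : (4 : ℤ) ≤ m := hgt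
      have : (4 : ℝ) ≤ (m : ℝ) := by exact_mod_cast this
      linarith
    have : dist x y = 0 := by
      rw [hdist, Real.sqrt_eq_zero'.2 h1]
    exact hne (by rwa [dist_eq_zero] at this)

lemma nvec_dist {n : ℕ} (hn : 6 ≤ n) (B B' : Finset ℕ) (b b' : ℕ)
    (hB : ∀ k ∈ B, k < 6) (hB' : ∀ k ∈ B', k < 6) (hb : b < 6) (hb' : b' < 6) :
    dist (nvec n B b) (nvec n B' b') =
      Real.sqrt (∑ k ∈ Finset.range 6, ((if k ∈ B then (1:ℝ) else if k = b then -1 else 0) -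
        (if k ∈ B' then (1:ℝ) else if k = b' then -1 else 0))^2) := by
  rw [dist_formula]
  congr 1
  have e1 : ∀ i ∈ (Finset.univ : Finset (Fin n)), (nvec n B b i - nvec n B' b' i)^2 =
      (fun k : ℕ => ((if k ∈ B then (1:ℝ) else if k = b then -1 else 0) -
        (if k ∈ B' then (1:ℝ) else if k = b' then -1 else 0))^2) i.val :=
    fun i _ => rfl
  rw [Finset.sum_congr rfl e1, sum_small hn (fun k : ℕ =>
      ((if k ∈ B then (1:ℝ) else if k = b then -1 else 0) -
        (if k ∈ B' then (1:ℝ) else if k = b' then -1 else 0))^2) (by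
    intro k hk
    have h1 : k ∉ B := fun hc => by have := hB k hc; omega
    have h2 : k ∉ B' := fun hc => by have := hB' k hc; omega
    have h3 : k ≠ b := by omega
    have h4 : k ≠ b' := by omega
    simp [h1, h2, h3, h4])]
  simp [Finset.sum_range_succ]

lemma pair_mem {n : ℕ} (hn : 6 ≤ n) (B' : Finset ℕ) (b' : ℕ)
    (hB'6 : ∀ k ∈ B', k < 6) (hBc' : B'.card = 3) (hb' : b' < 6) (hbB' : b' ∉ B') :
    nvec n B' b' ∈ {x : EuclideanSpace ℝ (Fin n) |
      ∃ σ : Equiv.Perm (Fin n), ∀ i, x i = nvec n {0,1,2} 3 (σ i)} := by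
  obtain ⟨σ, hσ⟩ := exists_perm_nvec (B := {0,1,2}) (b := 3) (B' := B') (b' := b')
    (by intro k hk; fin_cases hk <;> omega) (by rfl) (by omega) (by decide)
    (fun k hk => lt_of_lt_of_le (hB'6 k hk) hn) hBc' (by omega) hbB'
  exact ⟨σ, fun i => (hσ i).symm⟩

lemma zero_dist {n : ℕ} (hn : 6 ≤ n) (τ : Equiv.Perm (Fin n))
    (y : EuclideanSpace ℝ (Fin n)) (hy : ∀ i, y i = nvec n {0,1,2} 3 (τ i)) :
    dist (0 : EuclideanSpace ℝ (Fin n)) y = Real.sqrt 4 := by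
  rw [dist_formula]
  congr 1
  have e1 : ∀ i ∈ (Finset.univ : Finset (Fin n)),
      ((0 : EuclideanSpace ℝ (Fin n)) i - y i)^2 = (nvec n {0,1,2} 3 (τ i))^2 := by
    intro i _
    rw [hy i]
    show ((0:ℝ) - _)^2 = _
    ring
  rw [Finset.sum_congr rfl e1, nvec_sq_sum hn τ]

lemma target_ncard : (Real.sqrt '' ({2,4,6,8,10,12} : Set ℝ)).ncard = 6 := by
  rw [Set.ncard_image_of_injOn]
  · rw [show ({2,4,6,8,10,12} : Set ℝ) = ↑({2,4,6,8,10,12} : Finset ℝ) by simp,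
      Set.ncard_coe_finset]
    norm_num
  · intro a ha b hb h
    have ha' : (0:ℝ) ≤ a := by
      simp only [Set.mem_insert_iff, Set.mem_singleton_iff] at ha
      rcases ha with rfl|rfl|rfl|rfl|rfl|rfl <;> norm_num
    have hb' : (0:ℝ) ≤ b := by
      simp only [Set.mem_insert_iff, Set.mem_singleton_iff] at hb
      rcases hb with rfl|rfl|rfl|rfl|rfl|rfl <;> norm_num
    exact (Real.sqrt_inj ha' hb').1 h

/-- For `d ≥ 5`, the zero vector together with all coordinate permutations of
`(1,1,1,−1,0,…,0)` in `ℝ^{d+1}` form a `1 + (d−2) * (d+1).choose 3`-element `6`-distance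
set. -/
theorem perm_three_ones_negOne_six_distance (d : ℕ) (hd : 5 ≤ d)
    (v : EuclideanSpace ℝ (Fin (d + 1)))
    (hv : ∀ i : Fin (d + 1), v i = if i.val < 3 then 1 else if i.val = 3 then -1 else 0)
    (X : Set (EuclideanSpace ℝ (Fin (d + 1))))
    (hX : X = insert 0 {x | ∃ σ : Equiv.Perm (Fin (d + 1)), ∀ i, x i = v (σ i)}) :
    X.ncard = 1 + (d - 2) * (d + 1).choose 3 ∧
      ({r : ℝ | ∃ x ∈ X, ∃ y ∈ X, x ≠ y ∧ dist x y = r}).ncard = 6 := by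
  classical
  have hn : 6 ≤ d + 1 := by omega
  have hveq : v = nvec (d+1) {0,1,2} 3 := by
    ext i
    rw [hv i]
    have hiff : ((i : ℕ) < 3) ↔ ((i : ℕ) ∈ ({0,1,2} : Finset ℕ)) := by
      simp only [Finset.mem_insert, Finset.mem_singleton]
      omega
    simp only [nvec]
    exact if_congr hiff rfl rfl
  subst hveq
  subst hX
  set O : Set (EuclideanSpace ℝ (Fin (d+1))) :=
    {x | ∃ σ : Equiv.Perm (Fin (d+1)), ∀ i, x i = nvec (d+1) {0,1,2} 3 (σ i)} with hO
  have hOeq := orbit_eq (n := d+1) hn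
  rw [← hO] at hOeq
  have h0O : (0 : EuclideanSpace ℝ (Fin (d+1))) ∉ O := by
    rintro ⟨σ, hσ⟩
    have h1 := hσ (σ⁻¹ ⟨0, by omega⟩)
    rw [show σ (σ⁻¹ ⟨0, by omega⟩) = ⟨0, by omega⟩ from σ.apply_symm_apply _] at h1
    have h2 : nvec (d+1) {0,1,2} 3 ⟨0, by omega⟩ = 1 := by simp [nvec]
    rw [h2] at h1
    exact one_ne_zero h1.symm
  constructor
  · rw [Set.ncard_insert_of_notMem h0O (by rw [hOeq]; exact Finset.finite_toSet _)]
    rw [hOeq, Set.ncard_coe_finset, orbit_card hn]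
    have h3 : d + 1 - 3 = d - 2 := by omega
    rw [h3]
    ring
  · have hD : {r : ℝ | ∃ x ∈ insert 0 O, ∃ y ∈ insert 0 O, x ≠ y ∧ dist x y = r} =
        Real.sqrt '' ({2,4,6,8,10,12} : Set ℝ) := by
      ext r
      simp only [Set.mem_setOf_eq, Set.mem_image, Set.mem_insert_iff, Set.mem_singleton_iff]
      constructor
      · rintro ⟨x, hxX, y, hyX, hne, rfl⟩
        rcases hxX with rfl | ⟨σ, hσ⟩
        · rcases hyX with rfl | ⟨τ, hτ⟩
          · exact absurd rfl hne
          · exact ⟨4, by norm_num, (zero_dist hn τ y hτ).symm⟩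
        · rcases hyX with rfl | ⟨τ, hτ⟩
          · refine ⟨4, by norm_num, ?_⟩
            rw [dist_comm]
            exact (zero_dist hn σ x hσ).symm
          · obtain ⟨m, hm1, hm2, hm3⟩ := orbit_pair_dist hn σ τ x y hσ hτ hne
            interval_cases m
            · exact ⟨12, by norm_num, by rw [hm3]; norm_num⟩
            · exact ⟨10, by norm_num, by rw [hm3]; norm_num⟩
            · exact ⟨8, by norm_num, by rw [hm3]; norm_num⟩
            · exact ⟨6, by norm_num, by rw [hm3]; norm_num⟩
            · exact ⟨4, by norm_num, by rw [hm3]; norm_num⟩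
            · exact ⟨2, by norm_num, by rw [hm3]; norm_num⟩
      · have hmem : ∀ (B' : Finset ℕ) (b' : ℕ), (∀ k ∈ B', k < 6) → B'.card = 3 → b' < 6 →
            b' ∉ B' → nvec (d+1) B' b' ∈ insert 0 O :=
          fun B' b' h1 h2 h3 h4 => Set.mem_insert_iff.2 (Or.inr (pair_mem hn B' b' h1 h2 h3 h4))
        have hmem0 : nvec (d+1) {0,1,2} 3 ∈ insert 0 O :=
          hmem {0,1,2} 3 (by intro k hk; fin_cases hk <;> omega) (by rfl) (by omega) (by decide)
        have hne_of_dist : ∀ (x y : EuclideanSpace ℝ (Fin (d+1))) (c : ℝ), 0 < c →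
            dist x y = Real.sqrt c → x ≠ y := by
          intro x y c hc hxy h
          rw [h, dist_self] at hxy
          have := Real.sqrt_eq_zero'.1 hxy.symm
          linarith
        rintro ⟨c, hc, rfl⟩
        rcases hc with rfl | rfl | rfl | rfl | rfl | rfl
        · -- √2 : v and nvec {0,1,2} 4
          have hd1 : dist (nvec (d+1) ({0,1,2} : Finset ℕ) 3) (nvec (d+1) ({0,1,2} : Finset ℕ) 4)
              = Real.sqrt 2 := by
            rw [nvec_dist hn _ _ _ _ (by intro k hk; fin_cases hk <;> omega)
              (by intro k hk; fin_cases hk <;> omega) (by omega) (by omega)]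
            norm_num [Finset.sum_range_succ, Finset.mem_insert, Finset.mem_singleton]
          exact ⟨_, hmem0, _, hmem {0,1,2} 4 (by intro k hk; fin_cases hk <;> omega) (by rfl)
            (by omega) (by decide), hne_of_dist _ _ 2 (by norm_num) hd1, hd1⟩
        · -- √4 : 0 and v
          have hd1 : dist (0 : EuclideanSpace ℝ (Fin (d+1))) (nvec (d+1) ({0,1,2} : Finset ℕ) 3)
              = Real.sqrt 4 :=
            zero_dist hn 1 _ (fun i => rfl)
          exact ⟨_, Set.mem_insert _ _, _, hmem0, hne_of_dist _ _ 4 (by norm_num) hd1, hd1⟩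
        · -- √6
          have hd1 : dist (nvec (d+1) ({0,1,2} : Finset ℕ) 3) (nvec (d+1) ({0,1,3} : Finset ℕ) 4)
              = Real.sqrt 6 := by
            rw [nvec_dist hn _ _ _ _ (by intro k hk; fin_cases hk <;> omega)
              (by intro k hk; fin_cases hk <;> omega) (by omega) (by omega)]
            norm_num [Finset.sum_range_succ, Finset.mem_insert, Finset.mem_singleton]
          exact ⟨_, hmem0, _, hmem {0,1,3} 4 (by intro k hk; fin_cases hk <;> omega) (by rfl)
            (by omega) (by decide), hne_of_dist _ _ 6 (by norm_num) hd1, hd1⟩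
        · -- √8
          have hd1 : dist (nvec (d+1) ({0,1,2} : Finset ℕ) 3) (nvec (d+1) ({1,2,3} : Finset ℕ) 0)
              = Real.sqrt 8 := by
            rw [nvec_dist hn _ _ _ _ (by intro k hk; fin_cases hk <;> omega)
              (by intro k hk; fin_cases hk <;> omega) (by omega) (by omega)]
            norm_num [Finset.sum_range_succ, Finset.mem_insert, Finset.mem_singleton]
          exact ⟨_, hmem0, _, hmem {1,2,3} 0 (by intro k hk; fin_cases hk <;> omega) (by rfl)
            (by omega) (by decide), hne_of_dist _ _ 8 (by norm_num) hd1, hd1⟩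
        · -- √10
          have hd1 : dist (nvec (d+1) ({0,1,2} : Finset ℕ) 3) (nvec (d+1) ({0,3,4} : Finset ℕ) 1)
              = Real.sqrt 10 := by
            rw [nvec_dist hn _ _ _ _ (by intro k hk; fin_cases hk <;> omega)
              (by intro k hk; fin_cases hk <;> omega) (by omega) (by omega)]
            norm_num [Finset.sum_range_succ, Finset.mem_insert, Finset.mem_singleton]
          exact ⟨_, hmem0, _, hmem {0,3,4} 1 (by intro k hk; fin_cases hk <;> omega) (by rfl)
            (by omega) (by decide), hne_of_dist _ _ 10 (by norm_num) hd1, hd1⟩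
        · -- √12
          have hd1 : dist (nvec (d+1) ({0,1,2} : Finset ℕ) 3) (nvec (d+1) ({3,4,5} : Finset ℕ) 0)
              = Real.sqrt 12 := by
            rw [nvec_dist hn _ _ _ _ (by intro k hk; fin_cases hk <;> omega)
              (by intro k hk; fin_cases hk <;> omega) (by omega) (by omega)]
            norm_num [Finset.sum_range_succ, Finset.mem_insert, Finset.mem_singleton]
          exact ⟨_, hmem0, _, hmem {3,4,5} 0 (by intro k hk; fin_cases hk <;> omega) (by rfl)
            (by omega) (by decide), hne_of_dist _ _ 12 (by norm_num) hd1, hd1⟩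
    rw [hD, target_ncard]
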